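/- Assume the buyer distribution is regular. For s ∈ T^S with {r : φ(β_r) > s} nonempty, let q_B(s) = min{β_r : φ(β_r) > s}; for b ∈ T^B with {r : α_r ≤ φ(b)} nonempty, let q_S(b) = max{α_r : α_r ≤ φ(b)}. Then Σ_{(b,s) : φ(b) > s} f(b)·g(s)·( q_B(s) − q_S(b) ) ≥ 0; that is, the Generalized Seller-Offering Mechanism in bilateral trading is ex-ante weakly budget balanced. -/

import Mathlib

open Finset

/-- Buyer's Myerson virtual value:
`φ(β_r) = β_r − (β_{r+1} − β_r)·(Σ_{l>r} f(β_l))/f(β_r)` for `r < K-1`, `φ(β_{K-1}) = β_{K-1}`. -/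
noncomputable def buyerVirtual (K : ℕ) (β f : Fin K → ℝ) (r : Fin K) : ℝ :=
  β r - ((if h : (r : ℕ) + 1 < K then β ⟨(r : ℕ) + 1, h⟩ else β r) - β r)
      * (∑ l ∈ Finset.Ioi r, f l) / f r

lemma bv_step {K : ℕ} (β f : Fin K → ℝ) (hf : ∀ r, 0 < f r) (r : Fin K) :
    f r * buyerVirtual K β f r =
      β r * (∑ l ∈ Finset.Ici r, f l)
        - (if h : (r : ℕ) + 1 < K then β ⟨(r : ℕ) + 1, h⟩ else β r)
            * (∑ l ∈ Finset.Ioi r, f l) := by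
  have hr := (hf r).ne'
  have hIci : Finset.Ici r = insert r (Finset.Ioi r) := by
    ext x
    simp only [Finset.mem_Ici, Finset.mem_insert, Finset.mem_Ioi]
    constructor
    · intro h; rcases eq_or_lt_of_le h with h | h
      · exact Or.inl h.symm
      · exact Or.inr h
    · rintro (rfl | h); · exact le_refl _
      · exact le_of_lt h
  rw [hIci, Finset.sum_insert (by simp)]
  unfold buyerVirtual
  split_ifs with h' <;> field_simp <;> ring

lemma bv_telescope {K : ℕ} (β f : Fin K → ℝ) (hf : ∀ r, 0 < f r) (r0 : Fin K) :
    ∑ r ∈ Finset.Ici r0, f r * buyerVirtual K β f r = β r0 * ∑ r ∈ Finset.Ici r0, f r := by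
  induction' hn : (K - (r0 : ℕ)) with n ih generalizing r0
  · omega
  by_cases h : (r0 : ℕ) + 1 < K
  · set r1 : Fin K := ⟨(r0 : ℕ) + 1, h⟩ with hr1
    have hIoi : Finset.Ioi r0 = Finset.Ici r1 := by
      ext x
      simp only [Finset.mem_Ioi, Finset.mem_Ici, Fin.lt_def, Fin.le_def, hr1, Fin.val_mk]
      omega
    have hIci : Finset.Ici r0 = insert r0 (Finset.Ici r1) := by
      rw [← hIoi]
      ext x
      simp only [Finset.mem_Ici, Finset.mem_insert, Finset.mem_Ioi]
      constructor
      · intro hx; rcases eq_or_lt_of_le hx with hx | hx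
        · exact Or.inl hx.symm
        · exact Or.inr hx
      · rintro (rfl | hx); · exact le_refl _
        · exact le_of_lt hx
    have hnotmem : r0 ∉ Finset.Ici r1 := by
      simp only [Finset.mem_Ici, Fin.le_def, hr1, Fin.val_mk]; omega
    have hih := ih r1 (by simp [hr1]; omega)
    rw [hIci, Finset.sum_insert hnotmem, Finset.sum_insert hnotmem, hih,
      bv_step β f hf r0, hIoi]
    have : (if h' : (r0 : ℕ) + 1 < K then β ⟨(r0 : ℕ) + 1, h'⟩ else β r0) = β r1 := by
      rw [dif_pos h]
    rw [this, hIci, Finset.sum_insert hnotmem]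
    ring
  · have hIci : Finset.Ici r0 = {r0} := by
      ext x
      simp only [Finset.mem_Ici, Finset.mem_singleton, Fin.le_def]
      have := x.isLt
      constructor
      · intro hx; exact Fin.ext (by omega)
      · rintro rfl; exact le_refl _
    have hIoi : Finset.Ioi r0 = (∅ : Finset (Fin K)) := by
      ext x
      simp only [Finset.mem_Ioi, Finset.notMem_empty, iff_false, Fin.lt_def]
      have := x.isLt
      omega
    rw [hIci, Finset.sum_singleton, Finset.sum_singleton]
    unfold buyerVirtual
    rw [hIoi]
    simp [mul_comm]

/-- the Generalized Seller-Offering Mechanism in bilateral trading is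
ex-ante weakly budget balanced.  It trades exactly when `φ(b) > s`; the buyer pays the
threshold `qB(s) = min{β_r : φ(β_r) > s}` and the seller receives the threshold
`qS(b) = max{α_r : α_r ≤ φ(b)}`.  Then `Σ_{(b,s): φ(b) > s} f(b)g(s)(qB(s) − qS(b)) ≥ 0`. -/
theorem stmt_9 (K K' : ℕ) (hK : 0 < K) (hK' : 0 < K')
    (β f : Fin K → ℝ) (hβ : StrictMono β) (hf : ∀ r, 0 < f r) (hf1 : ∑ r, f r = 1)
    (α g : Fin K' → ℝ) (hα : StrictMono α) (hg : ∀ r, 0 < g r) (hg1 : ∑ r, g r = 1)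
    (hregB : Monotone (buyerVirtual K β f))
    (qB : Fin K' → ℝ) (qS : Fin K → ℝ)
    (hqB : ∀ s : Fin K', (∃ r : Fin K, α s < buyerVirtual K β f r) →
      ∃ r : Fin K, qB s = β r ∧ α s < buyerVirtual K β f r ∧
        ∀ r' : Fin K, α s < buyerVirtual K β f r' → β r ≤ β r')
    (hqS : ∀ b : Fin K, (∃ r : Fin K', α r ≤ buyerVirtual K β f b) →
      ∃ r : Fin K', qS b = α r ∧ α r ≤ buyerVirtual K β f b ∧
        ∀ r' : Fin K', α r' ≤ buyerVirtual K β f b → α r' ≤ α r) :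
    0 ≤ ∑ b : Fin K, ∑ s ∈ Finset.univ.filter (fun s : Fin K' => α s < buyerVirtual K β f b),
          f b * g s * (qB s - qS b) := by
  set φ := buyerVirtual K β f with hφ
  simp only [Finset.sum_filter]
  rw [Finset.sum_comm]
  simp only [← Finset.sum_filter]
  apply Finset.sum_nonneg
  intro s _
  set T := Finset.univ.filter (fun b : Fin K => α s < φ b) with hT
  by_cases hne : T.Nonempty
  · -- obtain minimizer r0
    obtain ⟨b0, hb0⟩ := hne
    rw [hT, Finset.mem_filter] at hb0
    obtain ⟨r0, hqBs, hr0, hr0min⟩ := hqB s ⟨b0, hb0.2⟩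
    have hTeq : T = Finset.Ici r0 := by
      ext b
      rw [hT]
      simp only [Finset.mem_filter, Finset.mem_univ, true_and, Finset.mem_Ici]
      constructor
      · intro hb
        exact hβ.le_iff_le.mp (hr0min b hb)
      · intro hb
        exact lt_of_lt_of_le hr0 (hregB hb)
    rw [hTeq]
    have hqSle : ∀ b ∈ Finset.Ici r0, qS b ≤ φ b := by
      intro b hb
      have hφb : α s < φ b := lt_of_lt_of_le hr0 (hregB (Finset.mem_Ici.mp hb))
      obtain ⟨r, heq, hle, -⟩ := hqS b ⟨s, le_of_lt hφb⟩
      rw [heq]; exact hle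
    have key : ∑ b ∈ Finset.Ici r0, f b * g s * (qB s - qS b)
        = g s * ∑ b ∈ Finset.Ici r0, f b * (φ b - qS b) := by
      rw [Finset.mul_sum]
      simp only [mul_sub, Finset.sum_sub_distrib]
      have htel := bv_telescope β f hf r0
      rw [← hφ] at htel
      have h1 : ∑ b ∈ Finset.Ici r0, f b * qB s = ∑ b ∈ Finset.Ici r0, f b * φ b := by
        calc ∑ b ∈ Finset.Ici r0, f b * qB s = β r0 * ∑ b ∈ Finset.Ici r0, f b := by
              rw [hqBs, Finset.mul_sum]
              exact Finset.sum_congr rfl fun b _ => mul_comm _ _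
          _ = ∑ b ∈ Finset.Ici r0, f b * φ b := htel.symm
      calc ∑ b ∈ Finset.Ici r0, f b * g s * qB s - ∑ b ∈ Finset.Ici r0, f b * g s * qS b
          = g s * (∑ b ∈ Finset.Ici r0, f b * qB s) - g s * (∑ b ∈ Finset.Ici r0, f b * qS b) := by
            rw [Finset.mul_sum, Finset.mul_sum]
            congr 1 <;> exact Finset.sum_congr rfl (fun b _ => by ring)
        _ = ∑ b ∈ Finset.Ici r0, g s * (f b * φ b) - ∑ b ∈ Finset.Ici r0, g s * (f b * qS b) := by
            rw [h1, Finset.mul_sum, Finset.mul_sum]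
    rw [key]
    apply mul_nonneg (le_of_lt (hg s))
    apply Finset.sum_nonneg
    intro b hb
    exact mul_nonneg (le_of_lt (hf b)) (sub_nonneg.mpr (hqSle b hb))
  · rw [Finset.not_nonempty_iff_eq_empty] at hne
    rw [← hT] at *
    rw [hne]
    simp
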